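/- Let μ = Σ_{j=1}^n a_j δ_{y_j} with distinct y_j ∈ ℝ and a_j ∈ ℂ, and μ̂ = Σ_{l=1}^k â_l δ_{ŷ_l} with distinct ŷ_l ∈ ℝ and â_l ∈ ℂ, and suppose F[μ̂](ω) = F[μ](ω) + w(ω) for all ω ∈ [0, Ω]. Fix j ∈ {1,…,n}, let ŷ_{j'} be a point among the ŷ_l that is closest to y_j, and let S be the finite set consisting of the points y_p for p ≠ j together with those ŷ_l, l ≠ j', that are not equal to any y_p; write s = #S. Then for any ω* with 0 < ω* ≤ Ω/s such that the s+1 numbers e^{i y_j ω*} and e^{i q ω*} (q ∈ S) are pairwise distinct, one has the identity â_{j'} · Π_{q∈S} (e^{i ŷ_{j'} ω*} − e^{i q ω*})/(e^{i y_j ω*} − e^{i q ω*}) = a_j + (w₁ᵀ v) / Π_{q∈S}(e^{i y_j ω*} − e^{i q ω*}), where w₁ = (w(0), w(ω*), …, w(s·ω*))ᵀ ∈ ℂ^{s+1} and v ∈ ℂ^{s+1} is the vector whose m-th entry (m = 1, …, s+1) equals (−1)^{s+1−m} times the elementary symmetric polynomial of degree s+1−m in the s variables e^{i q ω*}, q ∈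 S. -/

import Mathlib

open Polynomial in
lemma vieta_eval_aux (S : Finset ℝ) (f : ℝ → ℂ) (x : ℂ) :
    ∑ m ∈ Finset.range (S.card + 1),
      ((-1:ℂ)^(S.card - m) * ∑ T ∈ S.powersetCard (S.card - m), ∏ q ∈ T, f q) * x ^ m
    = ∏ q ∈ S, (x - f q) := by
  have hp : (∏ q ∈ S, (X - C (f q))) = ((S.1.map f).map fun t => X - C t).prod := by
    rw [Multiset.map_map]; rfl
  have hdeg : (∏ q ∈ S, (X - C (f q))).natDegree = S.card := by
    rw [hp]
    have := Polynomial.natDegree_multiset_prod_X_sub_C_eq_card (S.1.map f)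
    simpa [Function.comp] using this
  calc ∑ m ∈ Finset.range (S.card + 1),
        ((-1:ℂ)^(S.card - m) * ∑ T ∈ S.powersetCard (S.card - m), ∏ q ∈ T, f q) * x ^ m
      = ∑ m ∈ Finset.range (S.card + 1), (∏ q ∈ S, (X - C (f q))).coeff m * x ^ m := by
        refine Finset.sum_congr rfl fun m hm => ?_
        rw [Finset.mem_range, Nat.lt_succ_iff] at hm
        rw [hp, Multiset.prod_X_sub_C_coeff _ (by simpa using hm), Multiset.card_map,
          Finset.esymm_map_val]
        rfl
    _ = Polynomial.eval x (∏ q ∈ S, (X - C (f q))) :=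
        (Polynomial.eval_eq_sum_range' (by rw [hdeg]; exact Nat.lt_succ_self _) x).symm
    _ = ∏ q ∈ S, (x - f q) := by simp [Polynomial.eval_prod]


/-- **Location-amplitude identity (first identity).**
Suppose `F[μ̂](ω) = F[μ](ω) + w(ω)` on `[0, Ω]`, where `μ = Σ_j a_j δ_{y_j}` and
`μ̂ = Σ_l â_l δ_{ŷ_l}` have distinct supports. Fix `j`, let `ŷ_{j'}` be closest to `y_j`
among the `ŷ_l`, and let `S` consist of the `y_p`, `p ≠ j`, together with those
`ŷ_l`, `l ≠ j'`, not equal to any `y_p`; write `s = #S`.  Then for any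
`0 < ω* ≤ Ω / s` making the `s+1` numbers `e^{i y_j ω*}`, `e^{i q ω*}` (`q ∈ S`)
pairwise distinct,
`â_{j'} Π_{q∈S} (e^{i ŷ_{j'} ω*} − e^{i q ω*})/(e^{i y_j ω*} − e^{i q ω*})
  = a_j + (w₁ᵀ v) / Π_{q∈S} (e^{i y_j ω*} − e^{i q ω*})`,
where `w₁ = (w(0), w(ω*), …, w(s ω*))` and the `m`-th entry of `v` (zero-based,
`m = 0, …, s`) is `(−1)^{s−m}` times the degree-`(s−m)` elementary symmetric
polynomial in the variables `e^{i q ω*}`, `q ∈ S`. -/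
theorem location_amplitude_identity_one
    (n k : ℕ) (hn : 0 < n) (hk : 0 < k)
    (Ω : ℝ) (hΩ : 0 < Ω)
    (y : Fin n → ℝ) (hy : Function.Injective y) (a : Fin n → ℂ)
    (yh : Fin k → ℝ) (hyh : Function.Injective yh) (ah : Fin k → ℂ)
    (w : ℝ → ℂ)
    (hdata : ∀ ω ∈ Set.Icc (0 : ℝ) Ω,
      ∑ l, ah l * Complex.exp (Complex.I * (yh l : ℂ) * (ω : ℂ))
        = ∑ p, a p * Complex.exp (Complex.I * (y p : ℂ) * (ω : ℂ)) + w ω)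
    (j : Fin n) (j' : Fin k)
    (hj' : ∀ l, |yh j' - y j| ≤ |yh l - y j|)
    (S : Finset ℝ)
    (hS : S = Finset.image y (Finset.univ.erase j)
        ∪ Finset.image yh ((Finset.univ.erase j').filter fun l => ∀ p, yh l ≠ y p))
    (s : ℕ) (hs : s = S.card)
    (ωs : ℝ) (hωs0 : 0 < ωs) (hωs1 : ωs ≤ Ω / s)
    (hinj : Set.InjOn (fun t : ℝ => Complex.exp (Complex.I * (t : ℂ) * (ωs : ℂ)))
      (insert (y j) (S : Set ℝ))) :
    ah j' * ∏ q ∈ S,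
        ((Complex.exp (Complex.I * (yh j' : ℂ) * (ωs : ℂ))
            - Complex.exp (Complex.I * (q : ℂ) * (ωs : ℂ)))
          / (Complex.exp (Complex.I * (y j : ℂ) * (ωs : ℂ))
            - Complex.exp (Complex.I * (q : ℂ) * (ωs : ℂ))))
      = a j +
        (∑ m ∈ Finset.range (s + 1),
            w ((m : ℝ) * ωs) *
              ((-1 : ℂ) ^ (s - m) *
                ∑ T ∈ S.powersetCard (s - m),
                  ∏ q ∈ T, Complex.exp (Complex.I * (q : ℂ) * (ωs : ℂ))))
          / ∏ q ∈ S,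
              (Complex.exp (Complex.I * (y j : ℂ) * (ωs : ℂ))
                - Complex.exp (Complex.I * (q : ℂ) * (ωs : ℂ))) := by
  set z : ℝ → ℂ := fun t => Complex.exp (Complex.I * (t : ℂ) * (ωs : ℂ)) with hz
  have hspos : 0 < s := by
    rcases Nat.eq_zero_or_pos s with h0 | h; · simp [h0] at hωs1; linarith
    exact h
  have hsΩ : (s : ℝ) * ωs ≤ Ω := by
    rw [le_div_iff₀ (by exact_mod_cast hspos)] at hωs1
    linarith [hωs1]
  have hpow : ∀ (t : ℝ) (m : ℕ),
      Complex.exp (Complex.I * (t : ℂ) * ((m : ℝ) * ωs : ℝ)) = (z t) ^ m := by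
    intro t m
    rw [hz, ← Complex.exp_nat_mul]
    push_cast
    ring_nf
  have E : ∀ m ∈ Finset.range (s + 1),
      ∑ l, ah l * (z (yh l)) ^ m = ∑ p, a p * (z (y p)) ^ m + w ((m : ℝ) * ωs) := by
    intro m hm
    rw [Finset.mem_range, Nat.lt_succ_iff] at hm
    have hmem : ((m : ℝ) * ωs) ∈ Set.Icc (0 : ℝ) Ω := by
      constructor
      · positivity
      · calc (m : ℝ) * ωs ≤ (s : ℝ) * ωs := by
              apply mul_le_mul_of_nonneg_right _ hωs0.le
              exact_mod_cast hm
          _ ≤ Ω := hsΩ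
    have := hdata ((m : ℝ) * ωs) hmem
    simpa only [hpow] using this
  set v : ℕ → ℂ := fun m => (-1 : ℂ) ^ (s - m) *
      ∑ T ∈ S.powersetCard (s - m), ∏ q ∈ T, z q with hv
  set P : ℂ → ℂ := fun x => ∏ q ∈ S, (x - z q) with hP
  have hvieta : ∀ x : ℂ, ∑ m ∈ Finset.range (s + 1), v m * x ^ m = P x := by
    intro x
    simp only [hv, hP, hs]
    exact vieta_eval_aux S z x
  have hswap : ∀ {ι : Type} [Fintype ι] (c : ι → ℂ) (x : ι → ℂ),
      ∑ m ∈ Finset.range (s + 1), v m * ∑ i, c i * x i ^ m = ∑ i, c i * P (x i) := by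
    intro ι _ c x
    simp_rw [Finset.mul_sum]
    rw [Finset.sum_comm]
    refine Finset.sum_congr rfl fun i _ => ?_
    rw [← hvieta (x i), Finset.mul_sum]
    exact Finset.sum_congr rfl fun m _ => by ring
  -- combine
  have hcomb : ∑ l, ah l * P (z (yh l))
      = ∑ p, a p * P (z (y p)) + ∑ m ∈ Finset.range (s + 1), v m * w ((m : ℝ) * ωs) := by
    rw [← hswap, ← hswap]
    rw [Finset.sum_congr rfl fun m hm => congrArg (v m * ·) (E m hm)]
    simp_rw [mul_add, Finset.sum_add_distrib]
  -- membership facts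
  have hyjS : y j ∉ S := by
    rw [hS]
    intro hmem
    rcases Finset.mem_union.mp hmem with h | h
    · obtain ⟨p, hp, hpe⟩ := Finset.mem_image.mp h
      exact (Finset.mem_erase.mp hp).1 (hy hpe)
    · obtain ⟨l, hl, hle⟩ := Finset.mem_image.mp h
      exact ((Finset.mem_filter.mp hl).2 j) hle
  -- P vanishes on z q for q ∈ S
  have hPzero : ∀ q ∈ S, P (z q) = 0 := fun q hq =>
    Finset.prod_eq_zero hq (sub_self (z q))
  -- collapse the yh sum
  have hLHS : ∑ l, ah l * P (z (yh l)) = ah j' * P (z (yh j')) := by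
    refine Finset.sum_eq_single j' (fun l _ hl => ?_) (by simp)
    have hyhlS : yh l ∈ S := by
      rw [hS]
      by_cases hex : ∃ p, yh l = y p
      · obtain ⟨p, hp⟩ := hex
        have hpj : p ≠ j := by
          intro hpj
          have hylj : yh l = y j := by rw [hp, hpj]
          have h0 : |yh j' - y j| ≤ 0 := by
            have := hj' l
            rw [hylj] at this
            simpa using this
          have heq : yh j' = y j := by
            have h1 : |yh j' - y j| = 0 := le_antisymm h0 (abs_nonneg _)
            have := abs_eq_zero.mp h1
            linarith
          exact hl (hyh (hylj.trans heq.symm))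
        exact Finset.mem_union_left _ (Finset.mem_image.mpr
          ⟨p, Finset.mem_erase.mpr ⟨hpj, Finset.mem_univ p⟩, hp.symm⟩)
      · push_neg at hex
        exact Finset.mem_union_right _ (Finset.mem_image.mpr
          ⟨l, Finset.mem_filter.mpr ⟨Finset.mem_erase.mpr ⟨hl, Finset.mem_univ l⟩, hex⟩, rfl⟩)
    rw [hPzero _ hyhlS, mul_zero]
  have hRHS : ∑ p, a p * P (z (y p)) = a j * P (z (y j)) := by
    refine Finset.sum_eq_single j (fun p _ hp => ?_) (by simp)
    have : y p ∈ S := by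
      rw [hS]
      exact Finset.mem_union_left _ (Finset.mem_image.mpr
        ⟨p, Finset.mem_erase.mpr ⟨hp, Finset.mem_univ p⟩, rfl⟩)
    rw [hPzero _ this, mul_zero]
  -- denominator nonzero
  have hD : P (z (y j)) ≠ 0 := by
    refine Finset.prod_ne_zero_iff.mpr fun q hq => ?_
    rw [sub_ne_zero]
    intro hEq
    exact hyjS (hinj (Set.mem_insert _ _) (Set.mem_insert_of_mem _ hq) hEq ▸ hq)
  -- assemble
  have hmain : ah j' * P (z (yh j'))
      = a j * P (z (y j)) + ∑ m ∈ Finset.range (s + 1), v m * w ((m : ℝ) * ωs) := by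
    rw [← hLHS, hcomb, hRHS]
  have hratio : (∏ q ∈ S, ((z (yh j') - z q) / (z (y j) - z q)))
      = P (z (yh j')) / P (z (y j)) := by
    rw [Finset.prod_div_distrib]
  have hN : ∑ m ∈ Finset.range (s + 1), w ((m : ℝ) * ωs) * v m
      = ∑ m ∈ Finset.range (s + 1), v m * w ((m : ℝ) * ωs) :=
    Finset.sum_congr rfl fun m _ => mul_comm _ _
  show ah j' * ∏ q ∈ S, ((z (yh j') - z q) / (z (y j) - z q))
      = a j + (∑ m ∈ Finset.range (s + 1), w ((m : ℝ) * ωs) * v m) / P (z (y j))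
  rw [hratio, hN]
  field_simp
  rw [hmain]
  ring
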